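/- arXiv:1403.0710 — 6 statements merged into one kernel-verified Lean document; each statement's English description precedes it below -/
import Mathlib

section
/- Let A and B be Heyting algebras and let f : A → B be a surjective map that preserves binary meets and Heyting implication, i.e. f(a ⊓ a') = f(a) ⊓ f(a') and f(a ⇨ a') = f(a) ⇨ f(a') for all a, a' ∈ A. Then f preserves the bottom element and binary joins: f(⊥) = ⊥ and f(a ⊔ a') = f(a) ⊔ f(a') for all a, a' ∈ A. -/
/-- If `f : A → B` is a surjective map between Heyting algebras preserving binary
meets and Heyting implication, then `f` preserves the bottom element and binary joins. -/
theorem surjective_meet_himp_hom_preserves_bot_and_sup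
    {A B : Type*} [HeytingAlgebra A] [HeytingAlgebra B]
    (f : A → B) (hsurj : Function.Surjective f)
    (hmeet : ∀ a a' : A, f (a ⊓ a') = f a ⊓ f a')
    (himp : ∀ a a' : A, f (a ⇨ a') = f a ⇨ f a') :
    f ⊥ = ⊥ ∧ ∀ a a' : A, f (a ⊔ a') = f a ⊔ f a' := by
  have hmono : ∀ x y : A, x ≤ y → f x ≤ f y := by
    intro x y hxy
    have : f (x ⊓ y) = f x := by rw [inf_eq_left.2 hxy]
    calc f x = f x ⊓ f y := by rw [← hmeet, this]
    _ ≤ f y := inf_le_right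
  constructor
  · obtain ⟨z, hz⟩ := hsurj ⊥
    exact le_antisymm (hz ▸ hmono ⊥ z bot_le) bot_le
  · intro a a'
    refine le_antisymm ?_ (sup_le (hmono _ _ le_sup_left) (hmono _ _ le_sup_right))
    obtain ⟨z, hz⟩ := hsurj (f a ⊔ f a')
    have key : (a ⊔ a') ⊓ ((a ⇨ z) ⊓ (a' ⇨ z)) ≤ z := by
      rw [inf_sup_right]
      exact sup_le
        (le_trans (inf_le_inf_left a inf_le_left) (by rw [inf_comm]; exact himp_inf_le))
        (le_trans (inf_le_inf_left a' inf_le_right) (by rw [inf_comm]; exact himp_inf_le))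
    have := hmono _ _ key
    rw [hmeet, hmeet, himp, himp, hz] at this
    have h1 : f a ⇨ f a ⊔ f a' = ⊤ := himp_eq_top_iff.2 le_sup_left
    have h2 : f a' ⇨ f a ⊔ f a' = ⊤ := himp_eq_top_iff.2 le_sup_right
    rw [h1, h2, inf_top_eq, inf_top_eq] at this
    exact hz ▸ this
end

section
/- Let H and K be Heyting algebras and let f : H → K and g : K → H form a Galois connection, i.e. f(a) ≤ b if and only if a ≤ g(b) for all a ∈ H and b ∈ K. Then f preserves binary meets (f(a ⊓ a') = f(a) ⊓ f(a') for all a, a' ∈ H) if and only if a ⇨ g(b) = g(f(a) ⇨ b) for all a ∈ H and b ∈ K. -/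
/-- For a Galois connection `f ⊣ g` between Heyting algebras, `f` preserves binary
meets if and only if `a ⇨ g b = g (f a ⇨ b)` for all `a`, `b` (Frobenius condition). -/
theorem galoisConnection_meet_preserving_iff_frobenius
    {H K : Type*} [HeytingAlgebra H] [HeytingAlgebra K]
    (f : H → K) (g : K → H) (gc : ∀ (a : H) (b : K), f a ≤ b ↔ a ≤ g b) :
    (∀ a a' : H, f (a ⊓ a') = f a ⊓ f a') ↔ (∀ (a : H) (b : K), a ⇨ g b = g (f a ⇨ b)) := by
  have fmono : ∀ x y : H, x ≤ y → f x ≤ f y := by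
    intro x y h
    exact (gc x (f y)).2 (h.trans ((gc y (f y)).1 le_rfl))
  have counit : ∀ b : K, f (g b) ≤ b := fun b => (gc (g b) b).2 le_rfl
  constructor
  · intro hf a b
    apply le_antisymm
    · rw [← gc]
      rw [le_himp_iff, ← hf]
      calc f ((a ⇨ g b) ⊓ a) ≤ f (g b) := fmono _ _ (by simp)
        _ ≤ b := counit b
    · rw [le_himp_iff, ← gc, hf]
      calc f (g (f a ⇨ b)) ⊓ f a ≤ (f a ⇨ b) ⊓ f a := inf_le_inf_right _ (counit _)
        _ ≤ b := by simp
  · intro hfr a a'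
    apply le_antisymm
    · exact le_inf (fmono _ _ inf_le_left) (fmono _ _ inf_le_right)
    · rw [inf_comm, ← le_himp_iff, gc, ← hfr, le_himp_iff, inf_comm]
      exact (gc _ _).1 le_rfl
end

section
/- Let M be a partially ordered set and S ⊆ M a subset with the induced order. Let q send each up-set U of M to the up-set {y ∈ S | y ∈ U} of S, and let r send each up-set V of S to r(V) = {x ∈ M | for all y ∈ S with x ≤ y, y ∈ V}. Then: (i) r(V) is an up-set of M, and q and r form a Galois connection with q lower adjoint, i.e. q(U) ⊆ V if and only if U ⊆ r(V); (ii) q(r(V)) = V for every up-set V of S; (iii) r preserves binary intersections and Heyting implication: r(V ∩ W) = r(V) ∩ r(W) and r(V ⇨ W) = r(V) ⇨ r(W) for all up-sets V, W of S. -/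
/-- The restriction map on up-sets, sending an up-set `U` of `M` to its trace on `S`. -/
def upsetRestrict {M : Type*} [PartialOrder M] (S : Set M) (U : Set M) : Set S :=
  {y : S | (y : M) ∈ U}

/-- The upper adjoint of restriction: `r V = {x ∈ M | ∀ y ∈ S, x ≤ y → y ∈ V}`. -/
def upsetCorestrict {M : Type*} [PartialOrder M] (S : Set M) (V : Set S) : Set M :=
  {x : M | ∀ y : S, x ≤ (y : M) → y ∈ V}

/-- Heyting implication of up-sets of a poset:
`x ∈ U ⇨ V` iff for every `y ≥ x`, `y ∈ U` implies `y ∈ V`. -/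
def upsetHimp {X : Type*} [PartialOrder X] (U V : Set X) : Set X :=
  {x : X | ∀ y : X, x ≤ y → y ∈ U → y ∈ V}

/-- For a poset `M` and a subset `S ⊆ M` with the induced order:
(i) `r V` is an up-set and `q ⊣ r` is a Galois connection;
(ii) `q (r V) = V` for every up-set `V` of `S`;
(iii) `r` preserves binary intersections and Heyting implication of up-sets. -/
theorem upset_restriction_adjunction
    {M : Type*} [PartialOrder M] (S : Set M) :
    (∀ V : Set S, IsUpperSet V → IsUpperSet (upsetCorestrict S V)) ∧
    (∀ (U : Set M) (V : Set S), IsUpperSet U → IsUpperSet V →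
      (upsetRestrict S U ⊆ V ↔ U ⊆ upsetCorestrict S V)) ∧
    (∀ V : Set S, IsUpperSet V → upsetRestrict S (upsetCorestrict S V) = V) ∧
    (∀ V W : Set S, IsUpperSet V → IsUpperSet W →
      upsetCorestrict S (V ∩ W) = upsetCorestrict S V ∩ upsetCorestrict S W) ∧
    (∀ V W : Set S, IsUpperSet V → IsUpperSet W →
      upsetCorestrict S (upsetHimp V W) = upsetHimp (upsetCorestrict S V) (upsetCorestrict S W)) := by
  refine ⟨?_, ?_, ?_, ?_, ?_⟩
  · intro V _ a b hab ha y hby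
    exact ha y (hab.trans hby)
  · intro U V hU _
    constructor
    · intro h x hx y hxy
      exact h (hU hxy hx : (y : M) ∈ U)
    · intro h y hy
      exact h hy y le_rfl
  · intro V hV
    ext y
    constructor
    · intro h
      exact h y le_rfl
    · intro h z hz
      exact hV hz h
  · intro V W _ _
    ext x
    exact ⟨fun h => ⟨fun y hy => (h y hy).1, fun y hy => (h y hy).2⟩,
           fun h y hy => ⟨h.1 y hy, h.2 y hy⟩⟩
  · intro V W hV _
    ext x
    constructor
    · intro h y hxy hyV z hyz
      have hzV : z ∈ V := hyV z hyz
      exact h z (hxy.trans hyz) z le_rfl hzV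
    · intro h y hxy z hyz hzV
      have hzrV : (z : M) ∈ upsetCorestrict S V := fun w hzw => hV hzw hzV
      exact h z (hxy.trans hyz) hzrV z le_rfl
end

section
/- Let M be a partially ordered set in which the set {y ∈ M | x ≤ y} is finite for every x ∈ M. Then for every up-set A of M and every x ∉ A there exists a border point u of A with x ≤ u, i.e. a point u ≥ x with u ∉ A such that every z > u lies in A. -/
/-- In a poset in which every point has only finitely many successors (an image-finite
frame), every up-set has borders: for every up-set `A` and every `x ∉ A` there is a
border point `u ≥ x` of `A`, i.e. `u ∉ A` and every `z > u` lies in `A`. -/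
theorem imageFinite_hasBorders {M : Type*} [PartialOrder M]
    (hfin : ∀ x : M, {y : M | x ≤ y}.Finite)
    (A : Set M) (hA : IsUpperSet A) (x : M) (hx : x ∉ A) :
    ∃ u : M, x ≤ u ∧ u ∉ A ∧ ∀ z : M, u < z → z ∈ A := by
  have hS : ({y : M | x ≤ y ∧ y ∉ A}).Finite :=
    (hfin x).subset fun y hy => hy.1
  obtain ⟨u, hu, hmax⟩ := hS.exists_maximalFor id _ ⟨x, le_refl x, hx⟩
  refine ⟨u, hu.1, hu.2, fun z hz => ?_⟩
  by_contra hzA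
  exact absurd (hmax (j := z) ⟨hu.1.trans hz.le, hzA⟩ hz.le) hz.not_ge
end

section
/- Let M be a model on n variables and x ∈ M. Then x is separated if and only if there exists a (∧,→)-formula φ over the n variables such that x is a φ-border point. -/
/-- `(∧,→)`-formulas over `n` propositional variables. -/
inductive MeetImpForm (n : ℕ) : Type
  | var (i : Fin n) : MeetImpForm n
  | and (φ ψ : MeetImpForm n) : MeetImpForm n
  | imp (φ ψ : MeetImpForm n) : MeetImpForm n

/-- Kripke satisfaction of a `(∧,→)`-formula in a model given by a poset `M` with
colouring `c : M → Fin n → Bool`. -/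
def MeetImpSat {n : ℕ} {M : Type*} [PartialOrder M] (c : M → Fin n → Bool) :
    MeetImpForm n → M → Prop
  | .var i, x => c x i = true
  | .and φ ψ, x => MeetImpSat c φ x ∧ MeetImpSat c ψ x
  | .imp φ ψ, x => ∀ y : M, x ≤ y → MeetImpSat c φ y → MeetImpSat c ψ y

lemma meetImpSat_mono {n : ℕ} {M : Type*} [PartialOrder M] {c : M → Fin n → Bool}
    (hc : Monotone c) (φ : MeetImpForm n) :
    ∀ {x y : M}, x ≤ y → MeetImpSat c φ x → MeetImpSat c φ y := by
  induction φ with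
  | var i =>
    intro x y hxy h
    have := hc hxy i
    simp only [MeetImpSat] at h ⊢
    rw [h] at this
    exact le_antisymm (Bool.le_true _) this
  | and φ ψ ihφ ihψ =>
    intro x y hxy h
    exact ⟨ihφ hxy h.1, ihψ hxy h.2⟩
  | imp φ ψ ihφ ihψ =>
    intro x y hxy h z hyz hz
    exact h z (le_trans hxy hyz) hz

lemma meetImp_border_sep {n : ℕ} {M : Type*} [PartialOrder M] {c : M → Fin n → Bool}
    (hc : Monotone c) (φ : MeetImpForm n) :
    ∀ x : M, ¬ MeetImpSat c φ x → (∀ z : M, x < z → MeetImpSat c φ z) →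
    ∃ i : Fin n, c x i = false ∧ ∀ z : M, x < z → c z i = true := by
  induction φ with
  | var i =>
    intro x hx hz
    exact ⟨i, by simpa [MeetImpSat] using hx, hz⟩
  | and φ ψ ihφ ihψ =>
    intro x hx hz
    rcases not_and_or.mp hx with h | h
    · exact ihφ x h (fun z hz' => (hz z hz').1)
    · exact ihψ x h (fun z hz' => (hz z hz').2)
  | imp φ ψ ihφ ihψ =>
    intro x hx hz
    simp only [MeetImpSat, not_forall] at hx
    obtain ⟨y, hxy, hφy, hψy⟩ := hx
    have hyx : y = x := by
      by_contra hne
      have : x < y := lt_of_le_of_ne hxy (Ne.symm hne)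
      exact hψy (hz y this y le_rfl hφy)
    subst hyx
    refine ihψ y hψy (fun z hlt => ?_)
    exact hz z hlt z le_rfl (meetImpSat_mono hc φ hlt.le hφy)

/-- A point of a model is separated (a `p_i`-border point for some variable `p_i`)
if and only if it is a `φ`-border point for some `(∧,→)`-formula `φ`. -/
theorem separated_iff_meetImp_border
    {n : ℕ} {M : Type*} [PartialOrder M] (c : M → Fin n → Bool) (hc : Monotone c)
    (x : M) :
    (∃ i : Fin n, c x i = false ∧ ∀ z : M, x < z → c z i = true) ↔
    (∃ φ : MeetImpForm n, ¬ MeetImpSat c φ x ∧ ∀ z : M, x < z → MeetImpSat c φ z) := by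
  constructor
  · rintro ⟨i, hx, hz⟩
    exact ⟨.var i, by simp [MeetImpSat, hx], hz⟩
  · rintro ⟨φ, hx, hz⟩
    exact meetImp_border_sep hc φ x hx hz
end

section
/- Let M be a model on n variables. Then every chain in M consisting entirely of separated points has at most n elements. -/
/-- A point `x` of a model is separated if it is a `p_i`-border point for some
variable `p_i`, i.e. `p_i` is false at `x` but true at every proper successor. -/
def SeparatedPt {n : ℕ} {M : Type*} [PartialOrder M] (c : M → Fin n → Bool) (x : M) : Prop :=
  ∃ i : Fin n, c x i = false ∧ ∀ z : M, x < z → c z i = true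

/-- In a model on `n` variables, every chain consisting entirely of separated points
has at most `n` elements. -/
theorem chain_of_separated_card_le
    {n : ℕ} {M : Type*} [PartialOrder M] (c : M → Fin n → Bool) (hc : Monotone c)
    (C : Set M) (hchain : IsChain (· ≤ ·) C) (hsep : ∀ x ∈ C, SeparatedPt c x) :
    C.encard ≤ n := by
  rcases n with _ | m
  · have : C = ∅ := by
      ext x
      simp only [Set.mem_empty_iff_false, iff_false]
      intro hx
      obtain ⟨i, -⟩ := hsep x hx
      exact i.elim0
    simp [this]
  · classical
    set f : M → Fin (m + 1) := fun x =>
      if h : SeparatedPt c x then h.choose else 0 with hf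
    have hne : ∀ x ∈ C, ∀ y ∈ C, x < y → f x ≠ f y := by
      intro x hx y hy hxy
      have hxS := hsep x hx
      have hyS := hsep y hy
      have hxspec := hxS.choose_spec
      have hyspec := hyS.choose_spec
      simp only [hf, dif_pos hxS, dif_pos hyS]
      intro heq
      have h1 : c y hxS.choose = true := hxspec.2 y hxy
      have h2 : c y hyS.choose = false := hyspec.1
      rw [heq, h2] at h1
      exact Bool.false_ne_true h1
    have hinj : Set.InjOn f C := by
      intro x hx y hy hxy
      by_contra hne'
      rcases hchain hx hy hne' with h | h
      · exact hne x hx y hy (lt_of_le_of_ne h hne') hxy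
      · exact hne y hy x hx (lt_of_le_of_ne h (Ne.symm hne')) hxy.symm
    calc C.encard = (f '' C).encard := (hinj.encard_image).symm
      _ ≤ (Set.univ : Set (Fin (m + 1))).encard := Set.encard_mono (Set.subset_univ _)
      _ = (m + 1 : ℕ) := by simp [Set.encard_univ]
end
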